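/- For every real number δ > 0 there exists a polynomial q with natural-number coefficients such that for every natural number k ≥ 0 there exists a bipartite graph (L, R, E) where: L is the set of all binary strings of length at least k; R is a finite set whose cardinality satisfies (|R| : ℝ) < 2^(k+δ); every vertex x ∈ L has degree at most q(|x|), where the polynomial q does not depend on k; and (L, R, E) admits online matchings up to size 2^k. -/

import Mathlib

/-- The set of neighbors of a set `S` of left vertices in the bipartite graph
with edge relation `E`. -/
def nbhd {α β : Type*} (E : Set (α × β)) (S : Set α) : Set β :=
  {y | ∃ x ∈ S, (x, y) ∈ E}

/-- A bipartite graph with left vertices `L` and edge relation `E` admits online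
matchings up to size `s` if there is a strategy `g`, mapping each finite sequence of
pairwise distinct left vertices to a right vertex, such that for every sequence
`x₁, …, x_m` of pairwise distinct elements of `L` with `m ≤ s`, setting
`y_j = g(x₁, …, x_j)`, every `y_j` is a neighbor of `x_j` and the `y_j` are pairwise
distinct. -/
def AdmitsOnlineMatching {α β : Type*} (L : Set α) (E : Set (α × β)) (s : ℕ) : Prop :=
  ∃ g : List α → β,
    ∀ xs : List α, xs.Nodup → (∀ x ∈ xs, x ∈ L) → xs.length ≤ s →
      (∀ i : Fin xs.length, (xs.get i, g (xs.take (i + 1))) ∈ E) ∧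
      (∀ i j : Fin xs.length, i ≠ j → g (xs.take (i + 1)) ≠ g (xs.take (j + 1)))


open Finset

namespace Stmt13

abbrev ShortStr (B : ℕ) : Type := {l : List Bool // l.length < B}

instance (B : ℕ) : DecidableEq (ShortStr B) :=
  inferInstanceAs (DecidableEq {l : List Bool // l.length < B})

instance (B : ℕ) : Fintype (ShortStr B) :=
  Fintype.ofSurjective
    (fun p : Σ n : Fin B, (Fin n → Bool) =>
      (⟨List.ofFn p.2, by simpa using p.1.2⟩ : ShortStr B))
    (fun x => ⟨⟨⟨x.1.length, x.2⟩, x.1.get⟩, Subtype.ext (by simp [List.ofFn_get])⟩)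

lemma card_len_eq (B n : ℕ) (hn : n < B) :
    #(univ.filter (fun x : ShortStr B => x.1.length = n)) = 2 ^ n := by
  classical
  have h : (univ.filter (fun x : ShortStr B => x.1.length = n))
      = (univ : Finset (Fin n → Bool)).image (β := ShortStr B)
          (fun v => (⟨List.ofFn v, by simpa using hn⟩ : ShortStr B)) := by
    ext x
    simp only [mem_filter, mem_univ, true_and, mem_image]
    constructor
    · intro hx
      refine ⟨fun j => x.1.get (Fin.cast hx.symm j), Subtype.ext ?_⟩
      apply List.ext_get
      · simp [hx]
      · intro i h1 h2
        simp [List.get_ofFn]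
    · rintro ⟨v, -, rfl⟩
      simp
  rw [h, card_image_of_injective _ ?_, card_univ, Fintype.card_fun]
  · simp
  · intro a b hab
    exact List.ofFn_injective (congrArg Subtype.val hab)

lemma choose_le_two_pow (n k : ℕ) : n.choose k ≤ 2 ^ n := by
  rcases le_or_gt k n with h | h
  · calc n.choose k ≤ ∑ j ∈ range (n+1), n.choose j :=
        single_le_sum (fun j _ => Nat.zero_le _) (mem_range.mpr (by omega))
      _ = 2 ^ n := Nat.sum_range_choose n
  · rw [Nat.choose_eq_zero_of_lt h]; exact Nat.zero_le _

lemma ratio_pow_le (u : ℕ) (hu : 3 ≤ u) :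
    (((u - 2 : ℕ) : ℝ) / u) ^ u ≤ 1 / 4 := by
  have hx3 : (3:ℝ) ≤ (u:ℝ) := by exact_mod_cast hu
  have hx0 : (0:ℝ) < u := by linarith
  have hx1 : (0:ℝ) < (u:ℝ) - 1 := by linarith
  have hcast : ((u - 2 : ℕ) : ℝ) = (u:ℝ) - 2 := by
    have h2 : (2:ℕ) ≤ u := by omega
    push_cast [h2]
    ring
  set a : ℝ := ((u:ℝ) - 1) / u with ha
  have ha0 : 0 < a := by positivity
  have hinv : a⁻¹ = 1 + 1/((u:ℝ)-1) := by
    rw [ha]; field_simp; ring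
  have h2 : (2:ℝ) ≤ a⁻¹ ^ u := by
    rw [hinv]
    have hb : (-2:ℝ) ≤ 1/((u:ℝ)-1) := by
      have : (0:ℝ) ≤ 1/((u:ℝ)-1) := by positivity
      linarith
    have hh := one_add_mul_le_pow hb u
    have hge : (2:ℝ) ≤ 1 + (u:ℝ) * (1/((u:ℝ)-1)) := by
      rw [mul_one_div]
      have : (1:ℝ) ≤ (u:ℝ)/((u:ℝ)-1) := by
        rw [le_div_iff₀ hx1]; linarith
      linarith
    linarith
  have hau : a ^ u ≤ 1/2 := by
    have he : a ^ u = (a⁻¹ ^ u)⁻¹ := by rw [← inv_pow, inv_inv]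
    rw [he]
    calc (a⁻¹ ^ u)⁻¹ ≤ 2⁻¹ := inv_anti₀ (by norm_num) h2
      _ = 1/2 := by norm_num
  have hstep : (((u - 2 : ℕ) : ℝ) / u) ≤ a ^ 2 := by
    rw [hcast, ha, div_pow, div_le_div_iff₀ hx0 (by positivity)]
    nlinarith
  have h0 : (0:ℝ) ≤ ((u - 2 : ℕ) : ℝ) / u := by positivity
  calc (((u - 2 : ℕ) : ℝ) / u) ^ u ≤ (a ^ 2) ^ u := pow_le_pow_left₀ h0 hstep u
    _ = (a ^ u) ^ 2 := by rw [← pow_mul, ← pow_mul, Nat.mul_comm]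
    _ ≤ (1/2) ^ 2 := pow_le_pow_left₀ (by positivity) hau 2
    _ = 1/4 := by norm_num

set_option maxHeartbeats 1000000 in
lemma expander_exists (t B σ : ℕ) (ht : 1 ≤ t) (hσ : 1 ≤ σ) :
    ∃ N : List Bool → Finset ℕ,
      (∀ x, N x ⊆ range (σ * (2 ^ t + 1))) ∧
      (∀ x, #(N x) ≤ (2 ^ t + 1) * (x.length + (2 ^ t + 1))) ∧
      ∀ S : Finset (List Bool), (∀ x ∈ S, x.length < B) → #S = σ →
        σ * 2 ^ t - σ < #(S.biUnion N) := by
  classical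
  set u : ℕ := 2 ^ t + 1 with hu_def
  have hu3 : 3 ≤ u := by
    have h2 : 2 ≤ 2 ^ t := by
      calc 2 = 2 ^ 1 := rfl
        _ ≤ 2 ^ t := Nat.pow_le_pow_right (by norm_num) ht
    omega
  set m : ℕ := σ * u with hm_def
  have hm0 : 0 < m := Nat.mul_pos hσ (by omega)
  have h2σ : 2 * σ ≤ m := by
    have := Nat.mul_le_mul_left σ (show 2 ≤ u by omega)
    omega
  have hmsub : m - 2 * σ = σ * (u - 2) := by
    obtain ⟨a, ha⟩ : ∃ a, u = a + 2 := ⟨u - 2, by omega⟩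
    have e1 : σ * (a + 2) = σ * a + 2 * σ := by ring
    rw [hm_def, ha]
    simp only [Nat.add_sub_cancel]
    omega
  set d : ℕ → ℕ := fun n => u * (n + u) with hd_def
  -- the probability space
  let Ω : Type := ∀ x : ShortStr B, Fin (d x.1.length) → Fin m
  let NF : Ω → ShortStr B → Finset (Fin m) := fun ω x => univ.image (ω x)
  let bad : Ω → Prop := fun ω =>
    ∃ S : Finset (ShortStr B), #S = σ ∧ #(S.biUnion (NF ω)) + 2 * σ ≤ m
  let EV : (Fin σ → ShortStr B) → Finset (Fin m) → Finset Ω := fun f W =>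
    Fintype.piFinset (fun x : ShortStr B =>
      if x ∈ univ.image f then Fintype.piFinset (fun _ : Fin (d x.1.length) => Wᶜ) else univ)
  -- the union bound covering
  have hbad_sub : (univ.filter bad) ⊆
      (univ : Finset (Fin σ → ShortStr B)).biUnion (fun f =>
        ((univ : Finset (Fin m)).powersetCard (2*σ)).biUnion (fun W =>
          if Function.Injective f then EV f W else ∅)) := by
    intro ω hω
    obtain ⟨S, hScard, hSsmall⟩ := (mem_filter.mp hω).2
    have hcompl : 2*σ ≤ #((S.biUnion (NF ω))ᶜ) := by
      rw [card_compl]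
      have hcardm : Fintype.card (Fin m) = m := Fintype.card_fin m
      omega
    obtain ⟨W, hWsub, hWcard⟩ := exists_subset_card_eq hcompl
    let e := S.equivFin
    let f : Fin σ → ShortStr B := fun j => (e.symm (Fin.cast hScard.symm j)).1
    have hfinj : Function.Injective f := by
      intro a b hab
      have h1 : Fin.cast hScard.symm a = Fin.cast hScard.symm b :=
        e.symm.injective (Subtype.ext hab)
      have h2 : (a:ℕ) = (b:ℕ) := by simpa using congrArg Fin.val h1
      exact Fin.ext h2
    have hfim : ∀ x ∈ univ.image f, x ∈ S := by
      intro x hx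
      obtain ⟨j, -, rfl⟩ := mem_image.mp hx
      exact (e.symm _).2
    refine mem_biUnion.mpr ⟨f, mem_univ _, mem_biUnion.mpr ⟨W, ?_, ?_⟩⟩
    · exact mem_powersetCard.mpr ⟨subset_univ _, hWcard⟩
    · rw [if_pos hfinj]
      refine Fintype.mem_piFinset.mpr ?_
      intro x
      by_cases hx : x ∈ univ.image f
      · rw [if_pos hx]
        refine Fintype.mem_piFinset.mpr ?_
        intro s
        have hmem : (ω x s) ∈ S.biUnion (NF ω) :=
          mem_biUnion.mpr ⟨x, hfim x hx, mem_image.mpr ⟨s, mem_univ _, rfl⟩⟩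
        exact mem_compl.mpr (fun hW => (mem_compl.mp (hWsub hW)) hmem)
      · rw [if_neg hx]; exact mem_univ _
  -- probability of a single event
  set ρ : ℝ := ((m - 2*σ : ℕ) : ℝ) / m with hρ_def
  have hρ0 : (0:ℝ) ≤ ρ := by positivity
  have hσR : (0:ℝ) < (σ:ℝ) := by exact_mod_cast hσ
  have hρu : ρ ^ u ≤ 1/4 := by
    have he : ρ = ((u - 2 : ℕ) : ℝ) / u := by
      rw [hρ_def, hmsub, hm_def]
      push_cast
      rw [mul_div_mul_left _ _ (ne_of_gt hσR)]
    rw [he]; exact ratio_pow_le u hu3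
  have hΩcard : (Fintype.card Ω : ℝ) = ∏ x : ShortStr B, ((m:ℝ) ^ (d x.1.length)) := by
    have h1 : Fintype.card Ω = ∏ x : ShortStr B, m ^ (d x.1.length) := by
      rw [Fintype.card_pi]
      exact Finset.prod_congr rfl (fun x _ => by
        rw [Fintype.card_fun, Fintype.card_fin, Fintype.card_fin])
    rw [h1]; push_cast; rfl
  have hEVcard : ∀ f : Fin σ → ShortStr B, Function.Injective f →
      ∀ W ∈ (univ : Finset (Fin m)).powersetCard (2*σ),
      ((EV f W).card : ℝ) = (Fintype.card Ω : ℝ) * ∏ j : Fin σ, ρ ^ (d (f j).1.length) := by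
    intro f hf W hW
    have hWcard : #W = 2*σ := (mem_powersetCard.mp hW).2
    have h1 : #(EV f W) = ∏ x : ShortStr B,
        (if x ∈ univ.image f then (m - 2*σ) ^ (d x.1.length) else m ^ (d x.1.length)) := by
      show #(Fintype.piFinset _) = _
      rw [Fintype.card_piFinset]
      apply Finset.prod_congr rfl
      intro x _
      by_cases hx : x ∈ univ.image f
      · rw [if_pos hx, if_pos hx, Fintype.card_piFinset]
        rw [Finset.prod_const, card_univ, Fintype.card_fin, card_compl,
          Fintype.card_fin, hWcard]
      · rw [if_neg hx, if_neg hx, card_univ, Fintype.card_fun,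
          Fintype.card_fin, Fintype.card_fin]
    have h2 : ((EV f W).card : ℝ) = ∏ x : ShortStr B,
        ((m:ℝ)^(d x.1.length) * (if x ∈ univ.image f then ρ ^ (d x.1.length) else 1)) := by
      rw [h1]
      push_cast
      apply Finset.prod_congr rfl
      intro x _
      by_cases hx : x ∈ univ.image f
      · rw [if_pos hx, if_pos hx, hρ_def, div_pow, mul_div_assoc']
        rw [eq_div_iff (by positivity)]
        ring
      · rw [if_neg hx, if_neg hx, mul_one]
    rw [h2, Finset.prod_mul_distrib, ← hΩcard]
    congr 1
    rw [Finset.prod_ite_mem, univ_inter,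
      Finset.prod_image (fun a _ b _ h => hf h)]
  -- the weight sum over all short strings
  have hsum : ∑ x : ShortStr B, ρ ^ (d x.1.length) ≤ 2 * (1/4:ℝ)^u := by
    have hfib := sum_fiberwise_of_maps_to (s := (univ : Finset (ShortStr B)))
        (t := range B) (g := fun x : ShortStr B => x.1.length)
        (fun x _ => mem_range.mpr x.2) (fun x => ρ ^ (d x.1.length))
    rw [← hfib]
    have hfe : ∀ n ∈ range B,
        (∑ x ∈ univ.filter (fun x : ShortStr B => x.1.length = n), ρ ^ (d x.1.length))
          = (2:ℝ)^n * ρ^(d n) := by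
      intro n hn
      rw [Finset.sum_congr rfl (fun x hx => by rw [(mem_filter.mp hx).2]),
        Finset.sum_const, card_len_eq B n (mem_range.mp hn), nsmul_eq_mul]
      push_cast
      ring
    rw [Finset.sum_congr rfl hfe]
    have hterm : ∀ n ∈ range B, (2:ℝ)^n * ρ^(d n) ≤ (1/4:ℝ)^u * (1/2)^n := by
      intro n hn
      have h1 : ρ^(d n) ≤ ((1:ℝ)/4)^(n+u) := by
        have e : d n = u * (n + u) := rfl
        rw [e, pow_mul]
        calc (ρ ^ u) ^ (n+u) ≤ ((1/4:ℝ))^(n+u) :=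
          pow_le_pow_left₀ (by positivity) hρu _
        _ = _ := rfl
      calc (2:ℝ)^n * ρ^(d n) ≤ (2:ℝ)^n * ((1:ℝ)/4)^(n+u) := by
            apply mul_le_mul_of_nonneg_left h1 (by positivity)
        _ = (2 * (1/4:ℝ))^n * (1/4)^u := by rw [pow_add, ← mul_assoc, ← mul_pow]
        _ = (1/4:ℝ)^u * (1/2)^n := by norm_num [mul_comm]
    calc ∑ n ∈ range B, (2:ℝ)^n * ρ^(d n)
        ≤ ∑ n ∈ range B, (1/4:ℝ)^u * (1/2)^n := Finset.sum_le_sum hterm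
      _ = (1/4:ℝ)^u * ∑ n ∈ range B, ((1:ℝ)/2)^n := by rw [Finset.mul_sum]
      _ ≤ (1/4:ℝ)^u * 2 := by
          apply mul_le_mul_of_nonneg_left (sum_geometric_two_le B) (by positivity)
      _ = 2 * (1/4:ℝ)^u := by ring
  -- counting bad configurations
  have hΩpos : (0:ℝ) < (Fintype.card Ω : ℝ) := by
    have h1 : 0 < Fintype.card Ω :=
      Fintype.card_pos_iff.mpr ⟨fun x => fun _ => ⟨0, hm0⟩⟩
    exact_mod_cast h1
  have hcount : #(univ.filter bad) < Fintype.card Ω := by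
    have h1 : #(univ.filter bad) ≤
        ∑ f : Fin σ → ShortStr B, ∑ W ∈ (univ : Finset (Fin m)).powersetCard (2*σ),
          #(if Function.Injective f then EV f W else ∅) := by
      calc #(univ.filter bad)
          ≤ #((univ : Finset (Fin σ → ShortStr B)).biUnion (fun f =>
              ((univ : Finset (Fin m)).powersetCard (2*σ)).biUnion (fun W =>
                if Function.Injective f then EV f W else ∅))) := card_le_card hbad_sub
        _ ≤ ∑ f : Fin σ → ShortStr B, #(((univ : Finset (Fin m)).powersetCard (2*σ)).biUnion
              (fun W => if Function.Injective f then EV f W else ∅)) := card_biUnion_le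
        _ ≤ _ := Finset.sum_le_sum (fun f _ => card_biUnion_le)
    have h2 : (#(univ.filter bad) : ℝ) ≤
        (2:ℝ)^m * ((Fintype.card Ω : ℝ) *
          ∑ f : Fin σ → ShortStr B, ∏ j : Fin σ, ρ ^ (d (f j).1.length)) := by
      calc (#(univ.filter bad) : ℝ)
          ≤ ∑ f : Fin σ → ShortStr B, ∑ W ∈ (univ : Finset (Fin m)).powersetCard (2*σ),
              (#(if Function.Injective f then EV f W else ∅) : ℝ) := by
            exact_mod_cast h1
        _ ≤ ∑ f : Fin σ → ShortStr B,
              (2:ℝ)^m * ((Fintype.card Ω : ℝ) * ∏ j : Fin σ, ρ ^ (d (f j).1.length)) := by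
            apply Finset.sum_le_sum
            intro f _
            by_cases hf : Function.Injective f
            · simp only [if_pos hf]
              rw [Finset.sum_congr rfl (hEVcard f hf), Finset.sum_const, nsmul_eq_mul]
              have hcpc : ((#((univ : Finset (Fin m)).powersetCard (2*σ))) : ℝ) ≤ (2:ℝ)^m := by
                rw [card_powersetCard, card_univ, Fintype.card_fin]
                exact_mod_cast choose_le_two_pow m (2*σ)
              apply mul_le_mul_of_nonneg_right hcpc
              positivity
            · simp only [if_neg hf, card_empty, Nat.cast_zero, Finset.sum_const,
                nsmul_eq_mul, mul_zero]
              positivity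
        _ = (2:ℝ)^m * ((Fintype.card Ω : ℝ) *
              ∑ f : Fin σ → ShortStr B, ∏ j : Fin σ, ρ ^ (d (f j).1.length)) := by
            rw [← Finset.mul_sum, ← Finset.mul_sum]
    have h3 : (∑ x : ShortStr B, ρ ^ (d x.1.length)) ^ σ
        = ∑ f : Fin σ → ShortStr B, ∏ j : Fin σ, ρ ^ (d (f j).1.length) := by
      have hps := prod_univ_sum (fun _ : Fin σ => (univ : Finset (ShortStr B)))
        (fun _ x => ρ ^ (d x.1.length))
      simp only [Fintype.piFinset_univ] at hps
      rw [← hps, Finset.prod_const, card_univ, Fintype.card_fin]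
    have h4 : (#(univ.filter bad) : ℝ) <
        (Fintype.card Ω : ℝ) := by
      have hb1 : (∑ x : ShortStr B, ρ ^ (d x.1.length)) ^ σ ≤ (2 * (1/4:ℝ)^u) ^ σ :=
        pow_le_pow_left₀ (Finset.sum_nonneg (fun x _ => by positivity)) hsum σ
      have key : (2:ℝ)^m * (2 * (1/4:ℝ)^u) ^ σ < 1 := by
        have e1 : (2:ℝ)^m * (2 * (1/4:ℝ)^u) ^ σ = 2^(m+σ) / 4^(u*σ) := by
          rw [mul_pow, ← pow_mul, pow_add]
          field_simp
          rw [← mul_pow]; norm_num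
        rw [e1, div_lt_one (by positivity)]
        have e2 : (4:ℝ)^(u*σ) = 2^(2*(u*σ)) := by
          rw [show (4:ℝ) = 2^2 by norm_num, ← pow_mul]
        rw [e2]
        apply pow_lt_pow_right₀ one_lt_two
        have hlt : σ < u * σ := by
          have h1 := Nat.mul_lt_mul_of_pos_right (show 1 < u by omega) (show 0 < σ by omega)
          simpa using h1
        have hcomm : σ * u = u * σ := Nat.mul_comm σ u
        omega
      calc (#(univ.filter bad) : ℝ)
          ≤ (2:ℝ)^m * ((Fintype.card Ω : ℝ) *
              ∑ f : Fin σ → ShortStr B, ∏ j : Fin σ, ρ ^ (d (f j).1.length)) := h2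
        _ = (Fintype.card Ω : ℝ) * ((2:ℝ)^m * (∑ x : ShortStr B, ρ ^ (d x.1.length)) ^ σ) := by
            rw [h3]; ring
        _ ≤ (Fintype.card Ω : ℝ) * ((2:ℝ)^m * (2 * (1/4:ℝ)^u) ^ σ) := by
            apply mul_le_mul_of_nonneg_left ?_ (le_of_lt hΩpos)
            apply mul_le_mul_of_nonneg_left hb1 (by positivity)
        _ < (Fintype.card Ω : ℝ) * 1 := by
            apply mul_lt_mul_of_pos_left key hΩpos
        _ = (Fintype.card Ω : ℝ) := mul_one _
    exact_mod_cast h4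
  -- extract a good configuration
  obtain ⟨ω, hω⟩ : ∃ ω : Ω, ¬ bad ω := by
    by_contra hcon
    push_neg at hcon
    have he : univ.filter bad = univ := Finset.filter_true_of_mem (fun ω _ => hcon ω)
    rw [he, card_univ] at hcount
    exact lt_irrefl _ hcount
  refine ⟨fun x => if h : x.length < B then ((univ.image (ω ⟨x, h⟩)).image Fin.val) else ∅,
    ?_, ?_, ?_⟩
  · intro x
    dsimp only
    by_cases h : x.length < B
    · rw [dif_pos h]
      intro c hc
      obtain ⟨c', -, rfl⟩ := mem_image.mp hc
      exact mem_range.mpr c'.2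
    · rw [dif_neg h]
      exact empty_subset _
  · intro x
    dsimp only
    by_cases h : x.length < B
    · rw [dif_pos h]
      calc #((univ.image (ω ⟨x, h⟩)).image Fin.val) ≤ #(univ.image (ω ⟨x, h⟩)) :=
            card_image_le
        _ ≤ #(univ : Finset (Fin (d x.length))) := card_image_le
        _ = d x.length := by rw [card_univ, Fintype.card_fin]
        _ = (2 ^ t + 1) * (x.length + (2 ^ t + 1)) := rfl
    · rw [dif_neg h]
      simp
  · intro S hshort hcard
    dsimp only
    by_contra hle
    push_neg at hle
    apply hω
    classical
    let S' : Finset (ShortStr B) := S.attach.image (β := ShortStr B)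
      (fun y => (⟨y.1, hshort y.1 y.2⟩ : ShortStr B))
    have hS'card : #S' = σ := by
      rw [card_image_of_injective _ ?_, card_attach, hcard]
      intro a b hab
      apply Subtype.ext
      have h1 := congrArg (fun z : ShortStr B => z.1) hab
      simpa using h1
    refine ⟨S', hS'card, ?_⟩
    have himg : S.biUnion (fun x => if h : x.length < B
          then ((univ.image (ω ⟨x, h⟩)).image Fin.val) else ∅)
        = (S'.biUnion (NF ω)).image Fin.val := by
      ext c
      constructor
      · intro hc
        obtain ⟨x, hxS, hcx⟩ := mem_biUnion.mp hc
        have hxB := hshort x hxS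
        rw [dif_pos hxB] at hcx
        obtain ⟨cf, hcf, rfl⟩ := mem_image.mp hcx
        refine mem_image.mpr ⟨cf, mem_biUnion.mpr ⟨⟨x, hxB⟩, ?_, hcf⟩, rfl⟩
        exact mem_image.mpr ⟨⟨x, hxS⟩, mem_attach _ _, rfl⟩
      · intro hc
        obtain ⟨cf, hcf, rfl⟩ := mem_image.mp hc
        obtain ⟨x', hx'S', hcf2⟩ := mem_biUnion.mp hcf
        obtain ⟨y, -, rfl⟩ := mem_image.mp hx'S'
        refine mem_biUnion.mpr ⟨y.1, y.2, ?_⟩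
        rw [dif_pos (hshort y.1 y.2)]
        exact mem_image.mpr ⟨cf, hcf2, rfl⟩
    have hcards : #(S'.biUnion (NF ω)) = #(S.biUnion (fun x => if h : x.length < B
          then ((univ.image (ω ⟨x, h⟩)).image Fin.val) else ∅)) := by
      rw [himg, card_image_of_injective _ Fin.val_injective]
    have hbnd : #(S.biUnion (fun x => if h : x.length < B
          then ((univ.image (ω ⟨x, h⟩)).image Fin.val) else ∅)) ≤ σ * 2^t - σ := hle
    have hfin : σ * 2^t - σ = m - 2*σ := by
      rw [hmsub]
      obtain ⟨a, ha⟩ : ∃ a, 2^t = a + 1 := ⟨2^t - 1, by omega⟩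
      have e1 : σ * (a + 1) = σ * a + σ := by ring
      have e2 : u - 2 = a := by omega
      rw [ha, e2, e1]
      omega
    omega

end Stmt13

namespace Stmt13

noncomputable section Strategy

variable (I : ℕ) (N : ℕ → List Bool → Finset ℕ)

/-- cells of level `i` that are allowed for `x` and not yet occupied. -/
def freeAt (x : List Bool) (occ : List (ℕ × ℕ)) (i : ℕ) : Finset ℕ :=
  (N i x).filter (fun c => (i, c) ∉ occ)

open Classical in
/-- greedy choice: first level with a free allowed cell, smallest such cell. -/
def step (x : List Bool) (occ : List (ℕ × ℕ)) : ℕ × ℕ :=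
  if h : ∃ i, i ≤ I ∧ (freeAt N x occ i).Nonempty then
    (Nat.find h, (freeAt N x occ (Nat.find h)).min' (Nat.find_spec h).2)
  else (0, 0)

/-- process the (reversed) history. -/
def run : List (List Bool) → List (ℕ × ℕ)
  | [] => []
  | x :: s => step I N x (run s) :: run s

lemma run_nil : run I N [] = [] := rfl

lemma run_cons (x : List Bool) (s : List (List Bool)) :
    run I N (x :: s) = step I N x (run I N s) :: run I N s := rfl

def strat (l : List (List Bool)) : ℕ × ℕ := (run I N l.reverse).headI

variable (xs : List (List Bool))

def occL (j : ℕ) : List (ℕ × ℕ) := run I N ((xs.take j).reverse)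

def asg (j : ℕ) : ℕ × ℕ := step I N (xs.getD j []) (occL I N xs j)

lemma occL_succ {j : ℕ} (hj : j < xs.length) :
    occL I N xs (j+1) = asg I N xs j :: occL I N xs j := by
  have e1 : (xs.take (j+1)).reverse = (xs[j]) :: (xs.take j).reverse := by
    rw [List.take_succ, List.getElem?_eq_getElem hj]
    simp
  have hgd : xs.getD j [] = xs[j] := List.getD_eq_getElem xs [] hj
  show run I N ((xs.take (j+1)).reverse) = _
  rw [e1, run_cons]
  unfold asg occL
  rw [hgd]

lemma strat_take {j : ℕ} (hj : j < xs.length) :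
    strat I N (xs.take (j+1)) = asg I N xs j := by
  unfold strat
  have h : (xs.take (j+1)).reverse = (xs.take (j+1)).reverse := rfl
  have : run I N ((xs.take (j+1)).reverse) = occL I N xs (j+1) := rfl
  rw [this, occL_succ I N xs hj]
  rfl

lemma mem_occL {j : ℕ} (hj : j ≤ xs.length) {p : ℕ × ℕ} :
    p ∈ occL I N xs j ↔ ∃ j' < j, p = asg I N xs j' := by
  induction j with
  | zero => simp [occL, run]
  | succ j IH =>
    have hj' : j < xs.length := hj
    rw [occL_succ I N xs hj']
    simp only [List.mem_cons]
    rw [IH (le_of_lt hj')]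
    constructor
    · rintro (h | ⟨j', hj'', rfl⟩)
      · exact ⟨j, by omega, h⟩
      · exact ⟨j', by omega, rfl⟩
    · rintro ⟨j', hj'', rfl⟩
      rcases Nat.lt_succ_iff_lt_or_eq.mp hj'' with h | h
      · exact Or.inr ⟨j', h, rfl⟩
      · subst h; exact Or.inl rfl

theorem strat_works
    (k t B : ℕ) (ht : 1 ≤ t)
    (hIt : I * t ≤ k)
    (hbot : ∀ x : List Bool, N I x = Finset.range (2 ^ (k - I * t)))
    (hlong : ∀ i, i < I → ∀ x : List Bool, B ≤ x.length →
      N i x = Finset.range (2 ^ (k - (i+1) * t) * (2 ^ t + 1)))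
    (hexp : ∀ i, i < I → ∀ S : Finset (List Bool), (∀ x ∈ S, x.length < B) →
      S.card = 2 ^ (k - (i+1) * t) →
      2 ^ (k - i * t) - 2 ^ (k - (i+1) * t) < #(S.biUnion (N i)))
    (harith : ∀ i, i < I → 2 ^ (k - (i+1) * t) * 2 ^ t = 2 ^ (k - i * t))
    (xs : List (List Bool)) (hnd : xs.Nodup) (hlen : xs.length ≤ 2 ^ k) :
    ∀ j, j < xs.length →
      (asg I N xs j).1 ≤ I ∧
      (asg I N xs j).2 ∈ freeAt N (xs.getD j []) (occL I N xs j) ((asg I N xs j).1) ∧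
      (∀ i', i' < (asg I N xs j).1 → freeAt N (xs.getD j []) (occL I N xs j) i' = ∅) := by
  intro j
  induction j using Nat.strong_induction_on with
  | _ j IH =>
    intro hj
    set x := xs.getD j [] with hx_def
    set occ := occL I N xs j with hocc_def
    -- occupied cells at any time j' ≤ j are assignments of earlier indices
    have hoccmem : ∀ p : ℕ × ℕ, p ∈ occ ↔ ∃ j' < j, p = asg I N xs j' :=
      fun p => mem_occL I N xs (le_of_lt hj)
    -- counting filters
    set cGE : ℕ → ℕ := fun i => #((range j).filter (fun j' => i ≤ (asg I N xs j').1))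
      with hcGE_def
    set cE : ℕ → ℕ := fun i => #((range j).filter (fun j' => (asg I N xs j').1 = i))
      with hcE_def
    -- cell-counting: the free cells of level i missing means cells are occupied;
    -- occupied cells at level i are at most cE i
    have hkey2 : ∀ i : ℕ, ∀ U : Finset ℕ,
        (∀ c ∈ U, (i, c) ∈ occ) → #U ≤ cE i := by
      intro i U hU
      have hsub : U ⊆ ((range j).filter (fun j' => (asg I N xs j').1 = i)).image
          (fun j' => (asg I N xs j').2) := by
        intro c hc
        obtain ⟨j', hj', hp⟩ := (hoccmem (i, c)).mp (hU c hc)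
        refine mem_image.mpr ⟨j', mem_filter.mpr ⟨mem_range.mpr hj', ?_⟩, ?_⟩
        · rw [← hp]
        · rw [← hp]
      calc #U ≤ _ := card_le_card hsub
        _ ≤ _ := card_image_le
    -- disjointness counting
    have hcount : ∀ i : ℕ, cE i + cGE (i+1) ≤ cGE i := by
      intro i
      rw [hcE_def, hcGE_def]
      rw [← card_union_of_disjoint]
      · apply card_le_card
        intro j' hj'
        rcases mem_union.mp hj' with h | h
        · refine mem_filter.mpr ⟨(mem_filter.mp h).1, ?_⟩
          have := (mem_filter.mp h).2
          omega
        · refine mem_filter.mpr ⟨(mem_filter.mp h).1, ?_⟩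
          have := (mem_filter.mp h).2
          omega
      · apply Finset.disjoint_left.mpr
        intro a ha hb
        have h1 := (mem_filter.mp ha).2
        have h2 := (mem_filter.mp hb).2
        omega
    -- occupied lists grow over time
    have hoccsub : ∀ j', j' ≤ j → ∀ p : ℕ × ℕ, p ∈ occL I N xs j' → p ∈ occ := by
      intro j' hj' p hp
      obtain ⟨j'', h1, h2⟩ := (mem_occL I N xs (le_trans hj' (le_of_lt hj))).mp hp
      exact (hoccmem p).mpr ⟨j'', by omega, h2⟩
    -- earlier requests assigned at a level above i were stuck at level i
    have hstuckprev : ∀ j', j' < j → ∀ i, i < (asg I N xs j').1 →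
        ∀ c ∈ N i (xs.getD j' []), (i, c) ∈ occ := by
      intro j' hj' i hi c hc
      have h3 := (IH j' hj' (lt_trans hj' hj)).2.2 i hi
      have h4 : (i, c) ∈ occL I N xs j' := by
        by_contra hcon
        have hmem : c ∈ freeAt N (xs.getD j' []) (occL I N xs j') i :=
          mem_filter.mpr ⟨hc, hcon⟩
        rw [h3] at hmem
        exact absurd hmem (notMem_empty c)
      exact hoccsub j' (le_of_lt hj') _ h4
    -- the level-wise counting invariant
    have hEinv : ∀ i, i ≤ I → (∀ i', i' < i → freeAt N x occ i' = ∅) →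
        cGE i + 1 ≤ 2 ^ (k - i * t) := by
      intro i
      induction i with
      | zero =>
        intro _ _
        have h0 : cGE 0 = j := by
          rw [hcGE_def]
          simp only [Nat.zero_le, filter_true_of_mem, implies_true, card_range]
        rw [h0]
        simpa using lt_of_lt_of_le hj hlen
      | succ i IHi =>
        intro hi1 hstuck
        have hiI : i < I := by omega
        have hIHi := IHi (by omega) (fun i' h => hstuck i' (by omega))
        by_contra hcon
        push_neg at hcon
        set σ := 2 ^ (k - (i+1) * t) with hσ_def
        have hD : σ ≤ cGE (i+1) := by omega
        obtain ⟨T, hTsub, hTcard⟩ := exists_subset_card_eq hD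
        set S : Finset (List Bool) := T.image (fun j' => xs.getD j' []) with hS_def
        have hTmem : ∀ j' ∈ T, j' < j ∧ i + 1 ≤ (asg I N xs j').1 := by
          intro j' hj'
          have hh := hTsub hj'
          exact ⟨mem_range.mp (mem_filter.mp hh).1, (mem_filter.mp hh).2⟩
        have hinj : Set.InjOn (fun j' => xs.getD j' []) T := by
          intro a ha b hb hab
          have ha' : a < xs.length := lt_trans (hTmem a ha).1 hj
          have hb' : b < xs.length := lt_trans (hTmem b hb).1 hj
          have hga : xs.getD a [] = xs.get ⟨a, ha'⟩ := List.getD_eq_getElem xs [] ha'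
          have hgb : xs.getD b [] = xs.get ⟨b, hb'⟩ := List.getD_eq_getElem xs [] hb'
          have heq : xs.get ⟨a, ha'⟩ = xs.get ⟨b, hb'⟩ := by
            rw [← hga, ← hgb]; exact hab
          have hfin := List.nodup_iff_injective_get.mp hnd heq
          exact congrArg Fin.val hfin
        have hScard : #S = σ := by rw [hS_def, card_image_of_injOn hinj, hTcard]
        have hSstuck : ∀ y ∈ S, ∀ c ∈ N i y, (i, c) ∈ occ := by
          intro y hy c hc
          obtain ⟨j', hj'T, rfl⟩ := mem_image.mp hy
          refine hstuckprev j' (hTmem j' hj'T).1 i ?_ c hc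
          have := (hTmem j' hj'T).2
          omega
        have hSshort : ∀ y ∈ S, y.length < B := by
          intro y hy
          by_contra hlong'
          push_neg at hlong'
          have hNy := hlong i hiI y hlong'
          have hcard1 : #(Finset.range (σ * (2^t+1))) ≤ cE i := by
            apply hkey2
            intro c hc
            apply hSstuck y hy
            rw [hNy]
            exact hc
          rw [card_range] at hcard1
          have harith' := harith i hiI
          have h2σ : σ * (2^t+1) = 2^(k - i*t) + σ := by
            rw [Nat.mul_add, mul_one, harith']
          have hc1 := hcount i
          omega
        have hbig := hexp i hiI S hSshort hScard
        have hsmall : #(S.biUnion (N i)) ≤ cE i := by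
          apply hkey2
          intro c hc
          obtain ⟨y, hyS, hcy⟩ := mem_biUnion.mp hc
          exact hSstuck y hyS c hcy
        have hc1 := hcount i
        have hgeσ : σ * 2^t = 2^(k - i*t) := harith i hiI
        have hσpos : 1 ≤ σ := Nat.one_le_two_pow
        have h2t : 2 ≤ 2^t := by
          calc 2 = 2^1 := rfl
            _ ≤ 2^t := Nat.pow_le_pow_right (by norm_num) ht
        have hr2 : σ * 2 ≤ σ * 2^t := Nat.mul_le_mul_left σ h2t
        omega
    -- the greedy choice succeeds
    have hex : ∃ i, i ≤ I ∧ (freeAt N x occ i).Nonempty := by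
      by_contra hcon
      push_neg at hcon
      have hallstuck : ∀ i, i ≤ I → freeAt N x occ i = ∅ := by
        intro i hi
        exact hcon i hi
      have hEI := hEinv I (le_refl I) (fun i' hi' => hallstuck i' (le_of_lt hi'))
      have hNI := hbot x
      have hcard1 : #(Finset.range (2 ^ (k - I*t))) ≤ cE I := by
        apply hkey2
        intro c hc
        have hcN : c ∈ N I x := by rw [hNI]; exact hc
        by_contra hnotin
        have hmem : c ∈ freeAt N x occ I := mem_filter.mpr ⟨hcN, hnotin⟩
        rw [hallstuck I (le_refl I)] at hmem
        exact absurd hmem (notMem_empty c)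
      rw [card_range] at hcard1
      have hc1 := hcount I
      omega
    have hasg : asg I N xs j =
        (Nat.find hex, (freeAt N x occ (Nat.find hex)).min' (Nat.find_spec hex).2) := by
      show step I N (xs.getD j []) (occL I N xs j) = _
      rw [← hx_def, ← hocc_def]
      unfold step
      rw [dif_pos hex]
    refine ⟨?_, ?_, ?_⟩
    · rw [hasg]
      exact (Nat.find_spec hex).1
    · rw [hasg]
      exact min'_mem _ ((Nat.find_spec hex).2)
    · intro i' hi'
      rw [hasg] at hi'
      have := Nat.find_min hex (m := i') hi'
      push_neg at this
      exact (this (by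
        have := (Nat.find_spec hex).1
        omega))

end Strategy

end Stmt13

namespace Stmt13

lemma telescope (t k : ℕ) : ∀ I : ℕ, I * t ≤ k →
    (2^t - 1) * (∑ i ∈ range I, 2^(k-(i+1)*t)) + 2^(k - I*t) ≤ 2^k := by
  intro I
  induction I with
  | zero => simp
  | succ I IHI =>
    intro hIt
    have he : (I+1)*t = I*t + t := by ring
    have hIt' : I * t ≤ k := by omega
    rw [Finset.sum_range_succ]
    have hpow : 2^(k-(I+1)*t) * 2^t = 2^(k - I*t) := by
      rw [← pow_add]
      congr 1
      omega
    have IH2 := IHI hIt'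
    have h1 : 1 ≤ 2^t := Nat.one_le_two_pow
    have h2 : (2^t - 1) * 2^(k-(I+1)*t) + 2^(k-(I+1)*t) = 2^(k-I*t) := by
      obtain ⟨a, ha⟩ := Nat.exists_eq_add_of_le h1
      rw [← hpow, ha]
      have e2 : (1 + a - 1) = a := by omega
      rw [e2]
      ring
    have e3 : (2^t - 1) * ((∑ i ∈ range I, 2^(k-(i+1)*t)) + 2^(k-(I+1)*t))
        = (2^t - 1) * (∑ i ∈ range I, 2^(k-(i+1)*t)) + (2^t - 1) * 2^(k-(I+1)*t) :=
      Nat.mul_add _ _ _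
    omega

lemma pick_t (δ : ℝ) (hδ : 0 < δ) :
    ∃ t : ℕ, 1 ≤ t ∧ (1:ℝ) + 2/(2^t - 1) < (2:ℝ)^(δ:ℝ) := by
  have h1 : (1:ℝ) < (2:ℝ)^(δ:ℝ) :=
    (Real.one_lt_rpow_iff_of_pos (by norm_num)).mpr (Or.inl ⟨by norm_num, hδ⟩)
  set ε : ℝ := (2:ℝ)^(δ:ℝ) - 1 with hε
  have hε0 : 0 < ε := by simp [hε]; linarith
  obtain ⟨n, hn⟩ := pow_unbounded_of_one_lt (2/ε + 1) (show (1:ℝ) < 2 by norm_num)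
  refine ⟨n + 1, by omega, ?_⟩
  have h2 : (2:ℝ)^n ≤ 2^(n+1) := by
    apply pow_le_pow_right₀ (by norm_num) (by omega)
  have h3 : 2/ε + 1 < (2:ℝ)^(n+1) := lt_of_lt_of_le hn h2
  have h4 : (0:ℝ) < (2:ℝ)^(n+1) - 1 := by
    have : (1:ℝ) ≤ 2^(n+1) := one_le_pow₀ (by norm_num)
    nlinarith [div_pos (show (0:ℝ) < 2 by norm_num) hε0]
  have h5 : 2/ε < (2:ℝ)^(n+1) - 1 := by linarith
  have h6 : 2/((2:ℝ)^(n+1) - 1) < ε := by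
    rw [div_lt_iff₀ h4]
    rw [div_lt_iff₀ hε0] at h5
    linarith [mul_comm ε ((2:ℝ)^(n+1) - 1)]
  linarith [h6, hε]

end Stmt13

/-- second part of Makhlin's remark: for every real `δ > 0` there is a
polynomial `q` with natural coefficients such that for every `k ≥ 0` there is a
bipartite graph `(L, R, E)` where `L` is the set of binary strings of length at least
`k`, `|R| < 2^(k+δ)` (as real numbers), every `x ∈ L` has degree at most `q(|x|)`
(with `q` independent of `k`), and the graph admits online matchings up to size
`2^k`. -/
theorem stmt_13 (δ : ℝ) (hδ : 0 < δ) :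
    ∃ q : Polynomial ℕ, ∀ k : ℕ,
      ∃ (β : Type) (R : Set β) (E : Set (List Bool × β)),
        R.Finite ∧ (R.ncard : ℝ) < (2 : ℝ) ^ ((k : ℝ) + δ) ∧
        (∀ p ∈ E, k ≤ p.1.length ∧ p.2 ∈ R) ∧
        (∀ x : List Bool, k ≤ x.length → (nbhd E {x}).ncard ≤ q.eval x.length) ∧
        AdmitsOnlineMatching {x : List Bool | k ≤ x.length} E (2 ^ k) := by
  classical
  obtain ⟨t, ht1, ht2⟩ := Stmt13.pick_t δ hδ
  set a : ℕ := 2^t + 1 with ha_def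
  have h2t : 2 ≤ 2^t := by
    calc 2 = 2^1 := rfl
      _ ≤ 2^t := Nat.pow_le_pow_right (by norm_num) ht1
  refine ⟨Polynomial.C (a^2 + 2^t + 4) * (Polynomial.X + 1)^2, ?_⟩
  intro k
  set I : ℕ := k / t with hI_def
  set B : ℕ := 2^(k+2) with hB_def
  have hIt : I * t ≤ k := Nat.div_mul_le_self k t
  have hIk : I ≤ k := by
    calc I ≤ I * t := Nat.le_mul_of_pos_right I (by omega)
      _ ≤ k := hIt
  have hit1 : ∀ i, i < I → (i+1)*t ≤ k := by
    intro i hi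
    calc (i+1)*t ≤ I*t := Nat.mul_le_mul_right t (by omega)
      _ ≤ k := hIt
  have harith : ∀ i, i < I → 2^(k-(i+1)*t) * 2^t = 2^(k-i*t) := by
    intro i hi
    rw [← pow_add]
    congr 1
    have h1 := hit1 i hi
    have he : (i+1)*t = i*t + t := by ring
    omega
  have hbotlt : k - I*t < t := by
    have h3 := Nat.div_add_mod' k t
    have h2 : k % t < t := Nat.mod_lt k (by omega)
    rw [hI_def]
    omega
  -- choose expanders for every level
  have hNexists : ∀ i : ℕ, ∃ N : List Bool → Finset ℕ,
      (∀ x, N x ⊆ range (2^(k-(i+1)*t) * a)) ∧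
      (∀ x, #(N x) ≤ a * (x.length + a)) ∧
      (∀ S : Finset (List Bool), (∀ x ∈ S, x.length < B) → #S = 2^(k-(i+1)*t) →
        2^(k-(i+1)*t) * 2^t - 2^(k-(i+1)*t) < #(S.biUnion N)) := by
    intro i
    exact Stmt13.expander_exists t B (2^(k-(i+1)*t)) ht1 Nat.one_le_two_pow
  choose Nex hNsub hNcard hNexp using hNexists
  set mfun : ℕ → ℕ := fun i => if i < I then 2^(k-(i+1)*t) * a else 2^(k - I*t) with hmfun_def
  set NL : ℕ → List Bool → Finset ℕ := fun i x =>
    if i < I then (if x.length < B then Nex i x else range (2^(k-(i+1)*t) * a))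
    else range (2^(k - I*t)) with hNL_def
  have hNLsub : ∀ i x, NL i x ⊆ range (mfun i) := by
    intro i x
    rw [hNL_def, hmfun_def]
    dsimp only
    by_cases hi : i < I
    · rw [if_pos hi, if_pos hi]
      by_cases hx : x.length < B
      · rw [if_pos hx]; exact hNsub i x
      · rw [if_neg hx]
    · rw [if_neg hi, if_neg hi]
  set NB : List Bool → Finset (ℕ × ℕ) := fun x =>
    (range (I+1)).biUnion (fun i => {i} ×ˢ NL i x) with hNB_def
  set Rfin : Finset (ℕ × ℕ) :=
    (range (I+1)).biUnion (fun i => {i} ×ˢ range (mfun i)) with hR_def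
  have hcardBi : ∀ f : ℕ → Finset ℕ, #((range (I+1)).biUnion (fun i => {i} ×ˢ f i))
      = ∑ i ∈ range (I+1), #(f i) := by
    intro f
    rw [card_biUnion]
    · apply Finset.sum_congr rfl
      intro i _
      rw [Finset.card_product, card_singleton, one_mul]
    · intro x hx y hy hxy
      apply Finset.disjoint_left.mpr
      intro p hp hq
      have h1 := (Finset.mem_product.mp hp).1
      have h2 := (Finset.mem_product.mp hq).1
      rw [mem_singleton] at h1 h2
      exact hxy (by rw [← h1, ← h2])
  set G : ℕ := ∑ i ∈ range I, 2^(k-(i+1)*t) with hG_def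
  have htotal : ∑ i ∈ range (I+1), mfun i = 2^k + 2*G := by
    rw [Finset.sum_range_succ]
    have h1 : ∀ i ∈ range I, mfun i = 2^(k-i*t) + 2^(k-(i+1)*t) := by
      intro i hi
      have hi' := mem_range.mp hi
      rw [hmfun_def]
      dsimp only
      rw [if_pos hi', ha_def, Nat.mul_add, mul_one, harith i hi']
    rw [Finset.sum_congr rfl h1, Finset.sum_add_distrib]
    have h2 : mfun I = 2^(k-I*t) := by rw [hmfun_def]; simp
    have h4 : ∑ i ∈ range (I+1), 2^(k-i*t) = (∑ i ∈ range I, 2^(k-i*t)) + 2^(k-I*t) :=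
      Finset.sum_range_succ _ I
    have h5 : ∑ i ∈ range (I+1), 2^(k-i*t) = (∑ i ∈ range I, 2^(k-(i+1)*t)) + 2^k := by
      simpa using Finset.sum_range_succ' (fun i => 2^(k-i*t)) I
    rw [h2, hG_def]
    omega
  have htel := Stmt13.telescope t k I hIt
  have hG2 : (2^t - 1) * G ≤ 2^k := by
    rw [hG_def]
    exact le_trans (Nat.le_add_right _ _) htel
  have hGle : G ≤ 2^k := by
    calc G = 1 * G := (one_mul G).symm
      _ ≤ (2^t - 1) * G := Nat.mul_le_mul_right G (by omega)
      _ ≤ 2^k := hG2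
  have hRcard : #Rfin = 2^k + 2*G := by
    rw [hR_def, hcardBi]
    rw [Finset.sum_congr rfl (fun i _ => card_range (mfun i))]
    exact htotal
  refine ⟨ℕ × ℕ, ↑Rfin, {p : List Bool × (ℕ × ℕ) | k ≤ p.1.length ∧ p.2 ∈ NB p.1},
    Rfin.finite_toSet, ?_, ?_, ?_, ?_⟩
  · -- cardinality bound
    rw [Set.ncard_coe_finset, hRcard]
    have hpos : (0:ℝ) < (2:ℝ)^t - 1 := by
      have : (2:ℝ) ≤ (2:ℝ)^t := by exact_mod_cast h2t
      linarith
    have hGR : (G:ℝ) ≤ 2^k / ((2:ℝ)^t - 1) := by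
      rw [le_div_iff₀ hpos, mul_comm]
      have hc := (Nat.cast_le (α := ℝ)).mpr hG2
      have hcast : ((2^t - 1 : ℕ):ℝ) = (2:ℝ)^t - 1 := by
        push_cast [Nat.cast_sub (show 1 ≤ 2^t by omega)]
        ring
      calc ((2:ℝ)^t - 1) * G = ((2^t - 1:ℕ):ℝ) * G := by rw [hcast]
        _ = (((2^t-1)*G : ℕ) : ℝ) := by push_cast; ring
        _ ≤ ((2^k : ℕ):ℝ) := hc
        _ = (2:ℝ)^k := by push_cast; ring
    calc ((2^k + 2*G : ℕ):ℝ) = 2^k + 2*(G:ℝ) := by push_cast; ring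
      _ ≤ 2^k + 2*((2:ℝ)^k / ((2:ℝ)^t - 1)) := by
          have := mul_le_mul_of_nonneg_left hGR (show (0:ℝ) ≤ 2 by norm_num)
          push_cast at this ⊢
          linarith
      _ = (2:ℝ)^k * (1 + 2/((2:ℝ)^t-1)) := by field_simp
      _ < (2:ℝ)^k * (2:ℝ)^(δ:ℝ) := by
          apply mul_lt_mul_of_pos_left ht2 (by positivity)
      _ = (2:ℝ)^((k:ℝ)+δ) := by
          rw [Real.rpow_add (by norm_num), Real.rpow_natCast]
  · -- edges go between the right sets
    rintro ⟨x, p⟩ ⟨hklen, hpNB⟩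
    refine ⟨hklen, ?_⟩
    rw [hNB_def] at hpNB
    obtain ⟨i, hi, hp⟩ := mem_biUnion.mp hpNB
    refine mem_coe.mpr ?_
    rw [hR_def]
    refine mem_biUnion.mpr ⟨i, hi, ?_⟩
    have h1 := Finset.mem_product.mp hp
    exact Finset.mem_product.mpr ⟨h1.1, hNLsub i x h1.2⟩
  · -- degree bound
    intro x hklen
    have hnb : nbhd {p : List Bool × (ℕ × ℕ) | k ≤ p.1.length ∧ p.2 ∈ NB p.1} {x}
        = ↑(NB x) := by
      ext y
      constructor
      · rintro ⟨x', hx', h⟩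
        rw [Set.mem_singleton_iff] at hx'
        subst hx'
        exact h.2
      · intro hy
        exact ⟨x, rfl, hklen, hy⟩
    rw [hnb, Set.ncard_coe_finset]
    have hNBcard : #(NB x) = ∑ i ∈ range (I+1), #(NL i x) := by
      rw [hNB_def]; exact hcardBi _
    have heval : (Polynomial.C (a^2 + 2^t + 4) * (Polynomial.X + 1)^2).eval x.length
        = (a^2 + 2^t + 4) * (x.length + 1)^2 := by simp
    rw [hNBcard, heval]
    set n := x.length with hn_def
    by_cases hx : n < B
    · have hbound : ∀ i ∈ range (I+1), #(NL i x) ≤ (if i < I then a * (n + a) else 2^t) := by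
        intro i hi
        rw [hNL_def]
        dsimp only
        by_cases hiI : i < I
        · rw [if_pos hiI, if_pos hiI, if_pos hx]
          exact hNcard i x
        · rw [if_neg hiI, if_neg hiI, card_range]
          exact Nat.pow_le_pow_right (by norm_num) (by omega)
      have hsum1 : ∑ i ∈ range (I+1), (if i < I then a*(n+a) else 2^t) = I * (a*(n+a)) + 2^t := by
        rw [Finset.sum_range_succ]
        have h1 : ∀ i ∈ range I, (if i < I then a*(n+a) else 2^t) = a*(n+a) :=
          fun i hi => if_pos (mem_range.mp hi)
        rw [Finset.sum_congr rfl h1, Finset.sum_const, card_range, smul_eq_mul,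
          if_neg (lt_irrefl I)]
      calc ∑ i ∈ range (I+1), #(NL i x)
          ≤ ∑ i ∈ range (I+1), (if i < I then a*(n+a) else 2^t) := Finset.sum_le_sum hbound
        _ = I * (a*(n+a)) + 2^t := hsum1
        _ ≤ (a^2 + 2^t + 4) * (n+1)^2 := by
            have hIn : I ≤ n := le_trans hIk hklen
            have ha2 : 2 ≤ a := by omega
            have haa : a ≤ a * a := Nat.le_mul_of_pos_left a (by omega)
            have hstep1 : I * (a*(n+a)) ≤ n * (a*(n+a)) :=
              Nat.mul_le_mul_right _ hIn
            have e0 : n * (a*(n+a)) = a*(n*n) + (a*a)*n := by ring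
            have h1 : a * (n*n) ≤ (a*a) * (n*n) := Nat.mul_le_mul_right _ haa
            have e : (a^2+2^t+4)*(n+1)^2
                = (a*a)*(n*n) + (a*a)*(2*n) + (a*a) + (2^t+4)*((n+1)*(n+1)) := by ring
            have h3 : 1 ≤ (n+1)*(n+1) := Nat.one_le_iff_ne_zero.mpr (by positivity)
            have h2 : 2^t ≤ (2^t+4) * ((n+1)*(n+1)) := by
              calc 2^t = 2^t * 1 := (Nat.mul_one _).symm
                _ ≤ (2^t+4) * ((n+1)*(n+1)) := Nat.mul_le_mul (by omega) h3
            have h4 : (a*a)*n ≤ (a*a)*(2*n) := Nat.mul_le_mul_left _ (by omega)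
            omega
    · push_neg at hx
      have hbound : ∀ i ∈ range (I+1), #(NL i x) ≤ mfun i := by
        intro i hi
        calc #(NL i x) ≤ #(range (mfun i)) := card_le_card (hNLsub i x)
          _ = mfun i := card_range _
      calc ∑ i ∈ range (I+1), #(NL i x) ≤ ∑ i ∈ range (I+1), mfun i :=
            Finset.sum_le_sum hbound
        _ = 2^k + 2*G := htotal
        _ ≤ 2^(k+2) := by
            have e : 2^(k+2) = 4 * 2^k := by ring
            omega
        _ ≤ (a^2+2^t+4) * (n+1)^2 := by
            have h1 : B ≤ n := hx
            have h2 : 2^(k+2) = B := hB_def.symm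
            have h3 : n ≤ (n+1)^2 := by nlinarith
            have h4 : 1 ≤ a^2+2^t+4 := by omega
            calc 2^(k+2) = B := h2
              _ ≤ n := h1
              _ ≤ (n+1)^2 := h3
              _ = 1 * (n+1)^2 := (one_mul _).symm
              _ ≤ (a^2+2^t+4) * (n+1)^2 := Nat.mul_le_mul_right _ h4
  · -- online matching
    refine ⟨Stmt13.strat I NL, ?_⟩
    intro xs hnd hmem hcard
    have hworks := Stmt13.strat_works I NL k t B ht1 hIt
      (by
        intro x
        rw [hNL_def]
        dsimp only
        rw [if_neg (lt_irrefl I)])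
      (by
        intro i hi x hBx
        rw [hNL_def]
        dsimp only
        rw [if_pos hi, if_neg (by omega)])
      (by
        intro i hi S hshort hcard'
        have h1 := hNexp i S hshort hcard'
        rw [harith i hi] at h1
        have h2 : S.biUnion (NL i) = S.biUnion (Nex i) := by
          apply Finset.biUnion_congr rfl
          intro y hy
          rw [hNL_def]
          dsimp only
          rw [if_pos hi, if_pos (hshort y hy)]
        rw [h2]
        exact h1)
      harith xs hnd hcard
    have hne : ∀ p q : ℕ, p < q → q < xs.length →
        Stmt13.asg I NL xs p ≠ Stmt13.asg I NL xs q := by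
      intro p q hpq hq heq
      have hw := hworks q hq
      have hfree := hw.2.1
      have hnotin := (mem_filter.mp hfree).2
      have hin : Stmt13.asg I NL xs p ∈ Stmt13.occL I NL xs q :=
        (Stmt13.mem_occL I NL xs (le_of_lt hq)).mpr ⟨p, hpq, rfl⟩
      rw [heq] at hin
      rw [Prod.mk.eta] at hnotin
      exact hnotin hin
    constructor
    · intro i
      have hi : (i:ℕ) < xs.length := i.2
      have hw := hworks i hi
      rw [Stmt13.strat_take I NL xs hi]
      have hgd : xs.getD (i:ℕ) [] = xs.get i := List.getD_eq_getElem xs [] hi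
      refine ⟨hmem _ (List.get_mem xs i), ?_⟩
      have hfree := hw.2.1
      have hmemN := (mem_filter.mp hfree).1
      rw [hgd] at hmemN
      show Stmt13.asg I NL xs i ∈ NB (xs.get i)
      rw [hNB_def]
      dsimp only
      apply mem_biUnion.mpr
      refine ⟨(Stmt13.asg I NL xs i).1, mem_range.mpr (by omega), ?_⟩
      rw [show Stmt13.asg I NL xs (i:ℕ)
        = ((Stmt13.asg I NL xs (i:ℕ)).1, (Stmt13.asg I NL xs (i:ℕ)).2) from (Prod.mk.eta).symm]
      exact Finset.mem_product.mpr ⟨mem_singleton_self _, hmemN⟩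
    · intro i j hij
      have hi : (i:ℕ) < xs.length := i.2
      have hj : (j:ℕ) < xs.length := j.2
      rw [Stmt13.strat_take I NL xs hi, Stmt13.strat_take I NL xs hj]
      rcases Nat.lt_or_ge (i:ℕ) (j:ℕ) with h | h
      · exact hne i j h hj
      · have h2 : (j:ℕ) < (i:ℕ) := by
          rcases Nat.lt_or_ge (j:ℕ) (i:ℕ) with h3 | h3
          · exact h3
          · exact absurd (Fin.ext (by omega)) hij
        exact (hne j i h2 hi).symm
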